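/- Let H, R be finite-dimensional complex Hilbert spaces, B = ℂ², |ψ⟩ a unit vector in H⊗B⊗R, and γ, ε ∈ [0,1]. If there exists a (γ,ε)-superdense decoder against |ψ⟩, then there exists a (γ,ε)-radiation decoder against |ψ⟩. -/

import Mathlib

open Matrix BigOperators
open scoped ComplexOrder

noncomputable section

namespace BHRD

/-- A (qu)bit index. -/
abbrev Bit := ZMod 2

/-- The Pauli `X` matrix. -/
def Xm : Matrix Bit Bit ℂ := Matrix.of fun i j => if i = j + 1 then 1 else 0

/-- The Pauli `Z` matrix. -/
def Zm : Matrix Bit Bit ℂ := Matrix.of fun i j => if i = j then (if j = 1 then -1 else 1) else 0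

/-- The Pauli mask `X^x Z^z`. -/
def pauli (x z : Bit) : Matrix Bit Bit ℂ := Xm ^ x.val * Zm ^ z.val

/-- The EPR vector `(|00⟩+|11⟩)/√2`. -/
def epr : Bit × Bit → ℂ := fun p => if p.1 = p.2 then (((Real.sqrt 2 : ℝ) : ℂ))⁻¹ else 0

variable {dH dR : ℕ}

/-- The reduced density matrix of `|ψ⟩ ∈ H ⊗ B ⊗ R` on `B ⊗ R`, i.e. `Tr_H |ψ⟩⟨ψ|`. -/
def rhoBR (ψ : Fin dH × Bit × Fin dR → ℂ) :
    Matrix (Bit × Fin dR) (Bit × Fin dR) ℂ :=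
  Matrix.of fun p q => ∑ h : Fin dH, ψ (h, p) * (starRingEnd ℂ) (ψ (h, q))

/-- `(X^x Z^z) ⊗ I_R` acting on `B ⊗ R`. -/
def maskB (dR : ℕ) (x z : Bit) : Matrix (Bit × Fin dR) (Bit × Fin dR) ℂ :=
  Matrix.of fun p q => if p.2 = q.2 then pauli x z p.1 q.1 else 0

/-- The masked state `ρ^{xz} = (X^x Z^z ⊗ I) Tr_H|ψ⟩⟨ψ| (X^x Z^z ⊗ I)†`. -/
def rhoXZ (ψ : Fin dH × Bit × Fin dR → ℂ) (x z : Bit) :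
    Matrix (Bit × Fin dR) (Bit × Fin dR) ℂ :=
  maskB dR x z * rhoBR ψ * (maskB dR x z)ᴴ

/-- `K` is a family of Kraus operators for a (trace-preserving) quantum channel. -/
def IsKraus {α β : Type*} [Fintype α] [Fintype β] [DecidableEq β] {k : ℕ}
    (K : Fin k → Matrix α β ℂ) : Prop :=
  ∑ i, (K i)ᴴ * K i = 1

/-- Application of the channel with Kraus operators `K` to a state `ρ`. -/
def applyCh {α β : Type*} [Fintype α] [Fintype β] {k : ℕ}
    (K : Fin k → Matrix α β ℂ) (ρ : Matrix β β ℂ) : Matrix α α ℂ :=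
  ∑ i, K i * ρ * (K i)ᴴ

/-- The extension `id_B ⊗ A` of a channel `A : R → D ⊗ F` given by a Kraus operator `K`:
a Kraus operator from `B ⊗ R` to `B ⊗ D ⊗ F`. -/
def extB (K : Matrix (Bit × Bit) (Fin dR) ℂ) :
    Matrix (Bit × Bit × Bit) (Bit × Fin dR) ℂ :=
  Matrix.of fun p q => if p.1 = q.1 then K p.2 q.2 else 0

/-- The projector `I_{B⊗D} ⊗ |0⟩⟨0|_F` on `B ⊗ D ⊗ F`. -/
def PF0 : Matrix (Bit × Bit × Bit) (Bit × Bit × Bit) ℂ :=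
  Matrix.of fun p q =>
    if p.1 = q.1 ∧ p.2.1 = q.2.1 ∧ p.2.2 = 0 ∧ q.2.2 = 0 then 1 else 0

/-- The projector `|epr⟩⟨epr|_{B⊗D} ⊗ |0⟩⟨0|_F` on `B ⊗ D ⊗ F`. -/
def Pepr0 : Matrix (Bit × Bit × Bit) (Bit × Bit × Bit) ℂ :=
  Matrix.of fun p q =>
    (if p.2.2 = 0 ∧ q.2.2 = 0 then 1 else 0) *
      (epr (p.1, p.2.1) * (starRingEnd ℂ) (epr (q.1, q.2.1)))

/-- `K` is (the Kraus family of) a `(γ,ε)`-radiation decoder against `ψ`. -/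
def IsRadDecoder (ψ : Fin dH × Bit × Fin dR → ℂ) (γ ε : ℝ) {k : ℕ}
    (K : Fin k → Matrix (Bit × Bit) (Fin dR) ℂ) : Prop :=
  IsKraus K ∧
  γ ≤ ((PF0 * applyCh (fun i => extB (K i)) (rhoBR ψ)).trace).re ∧
  ((PF0 * applyCh (fun i => extB (K i)) (rhoBR ψ)).trace).re * (1/4 + (3/4) * ε) ≤
    ((Pepr0 * applyCh (fun i => extB (K i)) (rhoBR ψ)).trace).re

/-- The projector `I_P ⊗ |0⟩⟨0|_F` on `P ⊗ F`. -/
def QF0 : Matrix ((Bit × Bit) × Bit) ((Bit × Bit) × Bit) ℂ :=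
  Matrix.of fun p q => if p.1 = q.1 ∧ p.2 = 0 ∧ q.2 = 0 then 1 else 0

/-- The projector `|x,z⟩⟨x,z|_P ⊗ |0⟩⟨0|_F` on `P ⊗ F`. -/
def Qxz0 (x z : Bit) : Matrix ((Bit × Bit) × Bit) ((Bit × Bit) × Bit) ℂ :=
  Matrix.of fun p q => if p = ((x, z), 0) ∧ q = ((x, z), 0) then 1 else 0

/-- `K` is (the Kraus family of) a `(γ,ε)`-superdense decoder against `ψ`. -/
def IsSupDecoder (ψ : Fin dH × Bit × Fin dR → ℂ) (γ ε : ℝ) {k : ℕ}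
    (K : Fin k → Matrix ((Bit × Bit) × Bit) (Bit × Fin dR) ℂ) : Prop :=
  IsKraus K ∧
  γ ≤ (1/4) * ∑ x : Bit, ∑ z : Bit, ((QF0 * applyCh K (rhoXZ ψ x z)).trace).re ∧
  ((1/4) * ∑ x : Bit, ∑ z : Bit, ((QF0 * applyCh K (rhoXZ ψ x z)).trace).re) *
      (1/4 + (3/4) * ε) ≤
    (1/4) * ∑ x : Bit, ∑ z : Bit, ((Qxz0 x z * applyCh K (rhoXZ ψ x z)).trace).re

end BHRD

namespace BHRD

variable {dH dR k : ℕ}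

private lemma sumBit {M : Type*} [AddCommMonoid M] (f : Bit → M) : ∑ b, f b = f 0 + f 1 := by
  have h : (Finset.univ : Finset Bit) = {0, 1} := by decide
  rw [h, Finset.sum_insert (by decide), Finset.sum_singleton]

private lemma pauli_apply (x z b c : Bit) :
    pauli x z b c = if b = c + x then (if z = 1 ∧ c = 1 then -1 else 1) else 0 := by
  have hB : ∀ t : Bit, t = 0 ∨ t = 1 := by decide
  rcases hB x with rfl | rfl <;> rcases hB z with rfl | rfl <;>
    rcases hB b with rfl | rfl <;> rcases hB c with rfl | rfl <;>
    simp (config := { decide := true })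
      [pauli, Xm, Zm, Matrix.mul_apply, sumBit, pow_one, pow_zero, Matrix.one_apply,
       show ((1:Bit) + 1) = 0 from by decide, show (1:Bit).val = 1 from rfl,
       show (0:Bit).val = 0 from rfl]

/-- `(√2)⁻¹` as a complex number. -/
def sq2i : ℂ := (((Real.sqrt 2 : ℝ) : ℂ))⁻¹

private lemma sq2i_conj : (starRingEnd ℂ) sq2i = sq2i := by
  simp [sq2i, map_inv₀, Complex.conj_ofReal]

private lemma sq2i_sq : sq2i * sq2i = 2⁻¹ := by
  rw [sq2i, ← mul_inv, ← Complex.ofReal_mul, Real.mul_self_sqrt (by norm_num)]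
  norm_num

/-- Single Kraus operator of the radiation decoder built from one Kraus operator `A`
of the superdense decoder and a Pauli label `(x,z)`. -/
def Kop1 (A : Matrix ((Bit × Bit) × Bit) (Bit × Fin dR) ℂ) (x z : Bit) :
    Matrix (Bit × Bit) (Fin dR) ℂ :=
  Matrix.of fun df r => sq2i * ∑ u, pauli x z u df.1 * A ((x, z), df.2) (u, r)

private lemma krausA (A : Matrix ((Bit × Bit) × Bit) (Bit × Fin dR) ℂ) :
    ∑ x : Bit, ∑ z : Bit, (Kop1 A x z)ᴴ * Kop1 A x z
      = (sq2i * sq2i) • Matrix.of (fun r r' : Fin dR =>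
          ∑ p : (Bit × Bit) × Bit, ∑ u : Bit,
            (starRingEnd ℂ) (A p (u, r)) * A p (u, r')) := by
  ext r r'
  simp (config := { decide := true })
    [Kop1, Matrix.mul_apply, Matrix.conjTranspose_apply, Matrix.sum_apply,
     Matrix.smul_apply, Fintype.sum_prod_type, sumBit, pauli_apply, _root_.map_mul, map_sum,
     sq2i_conj, _root_.map_neg, _root_.map_one, smul_eq_mul,
     show ((1:Bit) + 1) = 0 from by decide]
  ring

set_option maxHeartbeats 2000000 in
private lemma MAi (A : Matrix ((Bit × Bit) × Bit) (Bit × Fin dR) ℂ) :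
    ∑ x : Bit, ∑ z : Bit, (extB (Kop1 A x z))ᴴ * PF0 * extB (Kop1 A x z)
      = (sq2i * sq2i * 2⁻¹) •
          ∑ x : Bit, ∑ z : Bit, (maskB dR x z)ᴴ * ((A)ᴴ * QF0 * A) * maskB dR x z := by
  ext ⟨b, r⟩ ⟨b', r'⟩
  have hB : ∀ t : Bit, t = 0 ∨ t = 1 := by decide
  rcases hB b with rfl | rfl <;> rcases hB b' with rfl | rfl <;>
    simp (config := { decide := true })
      [Kop1, extB, PF0, QF0, maskB, Matrix.mul_apply, Matrix.conjTranspose_apply,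
       Matrix.sum_apply, Matrix.smul_apply, Fintype.sum_prod_type, sumBit, pauli_apply,
       _root_.map_mul, map_sum, sq2i_conj, _root_.map_neg, _root_.map_one, smul_eq_mul,
       apply_ite (starRingEnd ℂ), mul_ite, ite_mul, mul_zero, zero_mul, mul_neg, neg_mul,
       Finset.sum_ite_eq, Finset.sum_ite_eq',
       show ((1:Bit) + 1) = 0 from by decide] <;>
    first | ring1 | exact Or.inr (by ring)

set_option maxHeartbeats 2000000 in
private lemma MBi (A : Matrix ((Bit × Bit) × Bit) (Bit × Fin dR) ℂ) :
    ∑ x : Bit, ∑ z : Bit, (extB (Kop1 A x z))ᴴ * Pepr0 * extB (Kop1 A x z)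
      = (sq2i * sq2i * (sq2i * sq2i)) •
          ∑ x : Bit, ∑ z : Bit, (maskB dR x z)ᴴ * ((A)ᴴ * Qxz0 x z * A) * maskB dR x z := by
  ext ⟨b, r⟩ ⟨b', r'⟩
  have hB : ∀ t : Bit, t = 0 ∨ t = 1 := by decide
  rcases hB b with rfl | rfl <;> rcases hB b' with rfl | rfl <;>
    simp (config := { decide := true })
      [Kop1, extB, Pepr0, Qxz0, maskB, epr, sq2i, Matrix.mul_apply,
       Matrix.conjTranspose_apply,
       Matrix.sum_apply, Matrix.smul_apply, Fintype.sum_prod_type, sumBit, pauli_apply,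
       _root_.map_mul, map_sum, _root_.map_neg, _root_.map_one, smul_eq_mul,
       apply_ite (starRingEnd ℂ), mul_ite, ite_mul, mul_zero, zero_mul, mul_neg, neg_mul,
       Finset.sum_ite_eq, Finset.sum_ite_eq', map_inv₀, Complex.conj_ofReal,
       show ((1:Bit) + 1) = 0 from by decide] <;>
    first | ring1 | exact Or.inr (by ring)

private lemma trace_cyc {α β : Type*} [Fintype α] [Fintype β]
    (P : Matrix α α ℂ) (A : Matrix α β ℂ) (ρ : Matrix β β ℂ) :
    (P * (A * ρ * Aᴴ)).trace = ((Aᴴ * P * A) * ρ).trace := by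
  rw [show P * (A * ρ * Aᴴ) = (P * A * ρ) * Aᴴ by
        simp only [Matrix.mul_assoc],
      Matrix.trace_mul_comm]
  simp only [Matrix.mul_assoc]

private lemma kraus_total (S : Fin k → Matrix ((Bit × Bit) × Bit) (Bit × Fin dR) ℂ)
    (hS : IsKraus S) :
    ∑ i, ∑ x : Bit, ∑ z : Bit, (Kop1 (S i) x z)ᴴ * Kop1 (S i) x z = 1 := by
  have h2 : ∀ (u : Bit) (r r' : Fin dR),
      (∑ i, ∑ p : (Bit × Bit) × Bit, (starRingEnd ℂ) (S i p (u, r)) * S i p (u, r'))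
        = if r = r' then 1 else 0 := by
    intro u r r'
    have hS' : ∑ i, (S i)ᴴ * S i = 1 := hS
    have := Matrix.ext_iff.mpr hS' (u, r) (u, r')
    simpa [IsKraus, Matrix.sum_apply, Matrix.mul_apply, Matrix.conjTranspose_apply,
      Matrix.one_apply, Prod.ext_iff] using this
  simp only [krausA]
  ext r r'
  have swap : (∑ i, ∑ p : (Bit × Bit) × Bit, ∑ u : Bit,
      (starRingEnd ℂ) (S i p (u, r)) * S i p (u, r'))
      = ∑ u : Bit, ∑ i, ∑ p : (Bit × Bit) × Bit,
        (starRingEnd ℂ) (S i p (u, r)) * S i p (u, r') := by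
    calc (∑ i, ∑ p : (Bit × Bit) × Bit, ∑ u : Bit,
        (starRingEnd ℂ) (S i p (u, r)) * S i p (u, r'))
        = ∑ i, ∑ u : Bit, ∑ p : (Bit × Bit) × Bit,
            (starRingEnd ℂ) (S i p (u, r)) * S i p (u, r') :=
          Finset.sum_congr rfl fun i _ => Finset.sum_comm
      _ = ∑ u : Bit, ∑ i, ∑ p : (Bit × Bit) × Bit,
            (starRingEnd ℂ) (S i p (u, r)) * S i p (u, r') := Finset.sum_comm
  simp only [Matrix.sum_apply, Matrix.smul_apply, Matrix.of_apply, smul_eq_mul,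
    ← Finset.mul_sum]
  rw [swap]
  simp only [h2]
  rw [sq2i_sq, sumBit]
  simp [Matrix.one_apply]
  split_ifs <;> norm_num

private lemma sum_rot (f : Fin k → Bit → Bit → ℂ) :
    ∑ i, ∑ x : Bit, ∑ z : Bit, f i x z = ∑ x : Bit, ∑ z : Bit, ∑ i, f i x z :=
  calc ∑ i, ∑ x : Bit, ∑ z : Bit, f i x z
      = ∑ x : Bit, ∑ i, ∑ z : Bit, f i x z := Finset.sum_comm
    _ = ∑ x : Bit, ∑ z : Bit, ∑ i, f i x z :=
        Finset.sum_congr rfl fun x _ => Finset.sum_comm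

private lemma hs4 : sq2i * sq2i * 2⁻¹ = (4⁻¹ : ℂ) := by rw [sq2i_sq]; norm_num
private lemma hs4' : sq2i * sq2i * (sq2i * sq2i) = (4⁻¹ : ℂ) := by rw [sq2i_sq]; norm_num

private lemma traceA (S : Fin k → Matrix ((Bit × Bit) × Bit) (Bit × Fin dR) ℂ)
    (ρ : Matrix (Bit × Fin dR) (Bit × Fin dR) ℂ) :
    (PF0 * ∑ i, ∑ x : Bit, ∑ z : Bit,
        extB (Kop1 (S i) x z) * ρ * (extB (Kop1 (S i) x z))ᴴ).trace
      = 4⁻¹ * ∑ x : Bit, ∑ z : Bit,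
          (QF0 * ∑ i, S i * (maskB dR x z * ρ * (maskB dR x z)ᴴ) * (S i)ᴴ).trace := by
  have hL : ∀ i, ∑ x : Bit, ∑ z : Bit,
      (((extB (Kop1 (S i) x z))ᴴ * PF0 * extB (Kop1 (S i) x z)) * ρ).trace
      = 4⁻¹ * ∑ x : Bit, ∑ z : Bit,
          (((maskB dR x z)ᴴ * ((S i)ᴴ * QF0 * (S i)) * maskB dR x z) * ρ).trace := by
    intro i
    have := congrArg (fun N => (N * ρ).trace) (MAi (S i))
    simpa [Matrix.sum_mul, Matrix.trace_sum, smul_mul_assoc, Matrix.trace_smul,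
      smul_eq_mul, hs4] using this
  simp only [Matrix.mul_sum, Matrix.trace_sum, trace_cyc]
  simp only [hL]
  rw [← Finset.mul_sum]
  congr 1
  exact sum_rot _

private lemma traceB (S : Fin k → Matrix ((Bit × Bit) × Bit) (Bit × Fin dR) ℂ)
    (ρ : Matrix (Bit × Fin dR) (Bit × Fin dR) ℂ) :
    (Pepr0 * ∑ i, ∑ x : Bit, ∑ z : Bit,
        extB (Kop1 (S i) x z) * ρ * (extB (Kop1 (S i) x z))ᴴ).trace
      = 4⁻¹ * ∑ x : Bit, ∑ z : Bit,
          (Qxz0 x z * ∑ i, S i * (maskB dR x z * ρ * (maskB dR x z)ᴴ) * (S i)ᴴ).trace := by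
  have hL : ∀ i, ∑ x : Bit, ∑ z : Bit,
      (((extB (Kop1 (S i) x z))ᴴ * Pepr0 * extB (Kop1 (S i) x z)) * ρ).trace
      = 4⁻¹ * ∑ x : Bit, ∑ z : Bit,
          (((maskB dR x z)ᴴ * ((S i)ᴴ * Qxz0 x z * (S i)) * maskB dR x z) * ρ).trace := by
    intro i
    have := congrArg (fun N => (N * ρ).trace) (MBi (S i))
    simpa [Matrix.sum_mul, Matrix.trace_sum, smul_mul_assoc, Matrix.trace_smul,
      smul_eq_mul, hs4'] using this
  simp only [Matrix.mul_sum, Matrix.trace_sum, trace_cyc]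
  simp only [hL]
  rw [← Finset.mul_sum]
  congr 1
  exact sum_rot _


/-- if there exists a `(γ,ε)`-superdense decoder against `|ψ⟩`,
then there exists a `(γ,ε)`-radiation decoder against `|ψ⟩`. -/
theorem superdense_decoder_implies_rad_decoder
    (dH dR : ℕ) (hdH : 1 ≤ dH) (hdR : 1 ≤ dR)
    (ψ : Fin dH × Bit × Fin dR → ℂ)
    (hψ : ∑ p, Complex.normSq (ψ p) = 1)
    (γ ε : ℝ) (hγ : γ ∈ Set.Icc (0:ℝ) 1) (hε : ε ∈ Set.Icc (0:ℝ) 1)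
    (hdec : ∃ (k : ℕ) (S : Fin k → Matrix ((Bit × Bit) × Bit) (Bit × Fin dR) ℂ),
      IsSupDecoder ψ γ ε S) :
    ∃ (k : ℕ) (K : Fin k → Matrix (Bit × Bit) (Fin dR) ℂ),
      IsRadDecoder ψ γ ε K := by
  obtain ⟨k, S, hSK, hg, he⟩ := hdec
  let e := Fintype.equivFin (Fin k × Bit × Bit)
  set K : Fin (Fintype.card (Fin k × Bit × Bit)) → Matrix (Bit × Bit) (Fin dR) ℂ :=
    fun j => Kop1 (S (e.symm j).1) (e.symm j).2.1 (e.symm j).2.2 with hK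
  have hApply : applyCh (fun j => extB (K j)) (rhoBR ψ)
      = ∑ i, ∑ x : Bit, ∑ z : Bit,
          extB (Kop1 (S i) x z) * rhoBR ψ * (extB (Kop1 (S i) x z))ᴴ := by
    show (∑ j, extB (K j) * rhoBR ψ * (extB (K j))ᴴ) = _
    simp only [hK]
    rw [Equiv.sum_comp e.symm (fun t : Fin k × Bit × Bit =>
      extB (Kop1 (S t.1) t.2.1 t.2.2) * rhoBR ψ * (extB (Kop1 (S t.1) t.2.1 t.2.2))ᴴ)]
    simp [Fintype.sum_prod_type]
  have hxz : ∀ x z : Bit, applyCh S (rhoXZ ψ x z)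
      = ∑ i, S i * (maskB dR x z * rhoBR ψ * (maskB dR x z)ᴴ) * (S i)ᴴ := fun _ _ => rfl
  have h2 : ((PF0 * applyCh (fun j => extB (K j)) (rhoBR ψ)).trace).re
      = (1/4) * ∑ x : Bit, ∑ z : Bit, ((QF0 * applyCh S (rhoXZ ψ x z)).trace).re := by
    rw [hApply, traceA]
    simp only [hxz]
    rw [Complex.mul_re]
    simp [Complex.re_sum, Complex.im_sum]
  have h3 : ((Pepr0 * applyCh (fun j => extB (K j)) (rhoBR ψ)).trace).re
      = (1/4) * ∑ x : Bit, ∑ z : Bit, ((Qxz0 x z * applyCh S (rhoXZ ψ x z)).trace).re := by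
    rw [hApply, traceB]
    simp only [hxz]
    rw [Complex.mul_re]
    simp [Complex.re_sum, Complex.im_sum]
  refine ⟨_, K, ?_, ?_, ?_⟩
  · show (∑ j, (K j)ᴴ * K j) = 1
    simp only [hK]
    rw [Equiv.sum_comp e.symm (fun t : Fin k × Bit × Bit =>
      (Kop1 (S t.1) t.2.1 t.2.2)ᴴ * Kop1 (S t.1) t.2.1 t.2.2)]
    simp only [Fintype.sum_prod_type]
    exact kraus_total S hSK
  · rw [h2]; exact hg
  · rw [h2, h3]; exact he

end BHRD
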